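/- arXiv:1303.4372 — 2 statements merged into one kernel-verified Lean document; each statement's English description precedes it below -/
import Mathlib

section
/- Assume the distribution P_X of X = (X₁,...,X_p) is equivalent to the product ⊗ᵢ₌₁ᵖ P_{X_i}. Then the Gram matrix A_φ, whose block entries are E[Φ_u(X_u)·ᵗΦ_v(X_v)] for u,v ∈ S^d, where Φ_u collects the hierarchically orthogonal basis functions (φ_{l_u}^u) of H_u^{0,L} constructed by the HOGS procedure, is nonsingular (positive definite). -/
open MeasureTheory

/-- Support of a multi-index `l`. -/
def suppOf {p : ℕ} {L : Fin p → ℕ} (l : (i : Fin p) → Fin (L i + 1)) : Finset (Fin p) :=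
  Finset.univ.filter fun i => l i ≠ 0

/-- Tensor-product function `x ↦ ∏ᵢ ψ_{l i}^i(x i)` (with `ψ_0^i = 1`). -/
noncomputable def tensorFun {p : ℕ} (ψ : (i : Fin p) → ℕ → ℝ → ℝ) {L : Fin p → ℕ}
    (l : (i : Fin p) → Fin (L i + 1)) : (Fin p → ℝ) → ℝ :=
  fun x => ∏ i, ψ i (l i) (x i)

lemma pi_prod_integrable' {p : ℕ} (μi : Fin p → Measure ℝ) [h : ∀ i, SigmaFinite (μi i)]
    {f : (i : Fin p) → ℝ → ℝ} (hf : ∀ i, Integrable (f i) (μi i)) :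
    Integrable (fun x : (i : Fin p) → ℝ => ∏ i, f i (x i)) (Measure.pi μi) :=
  Integrable.fintype_prod_dep (f := f) (μ := μi) hf

lemma pi_prod_integral' {p : ℕ} (μi : Fin p → Measure ℝ) [h : ∀ i, SigmaFinite (μi i)]
    (f : (i : Fin p) → ℝ → ℝ) :
    ∫ x : (i : Fin p) → ℝ, ∏ i, f i (x i) ∂(Measure.pi μi) = ∏ i, ∫ t, f i t ∂(μi i) :=
  integral_fintype_prod_eq_prod (μ := μi) f

open RealInnerProductSpace in
lemma inner_toLp_eq' {α : Type*} {m : MeasurableSpace α} {ν : Measure α}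
    {f g : α → ℝ} (hf : MemLp f 2 ν) (hg : MemLp g 2 ν) :
    ⟪hf.toLp f, hg.toLp g⟫ = ∫ x, f x * g x ∂ν := by
  rw [MeasureTheory.L2.inner_def]
  refine integral_congr_ae ?_
  filter_upwards [hf.coeFn_toLp, hg.coeFn_toLp] with x hx hy
  simp [hx, hy, RCLike.inner_apply, conj_trivial, mul_comm]

lemma coeFn_sum_smul_toLp' {α : Type*} [MeasurableSpace α] {ν : Measure α} {ι : Type*}
    (s : Finset ι) (x : ι → ℝ) (f : ι → α → ℝ) (hf : ∀ a, MemLp (f a) 2 ν) :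
    ⇑(∑ a ∈ s, x a • (hf a).toLp (f a)) =ᵐ[ν] fun y => ∑ a ∈ s, x a * f a y := by
  classical
  induction s using Finset.induction with
  | empty => simp only [Finset.sum_empty]; exact Lp.coeFn_zero ℝ 2 ν
  | @insert a s h ih =>
      rw [Finset.sum_insert h]
      filter_upwards [Lp.coeFn_add (x a • (hf a).toLp (f a)) (∑ b ∈ s, x b • (hf b).toLp (f b)),
        Lp.coeFn_smul (x a) ((hf a).toLp (f a)), (hf a).coeFn_toLp, ih] with y h1 h2 h3 h4
      simp only [Finset.sum_insert h, h1, Pi.add_apply, h2, Pi.smul_apply, h3, smul_eq_mul, h4]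

open RealInnerProductSpace in
/-- if `P_X` is equivalent to `⊗ᵢ P_{X_i}`, the Gram matrix of the
HOGS basis functions `φ_{l_u}^u` (corrected tensor products: each `φ_l` equals the
tensor product `T_l` plus a linear combination of tensor products with strictly
smaller support, including the constant) over `u ∈ S^d` is positive definite. -/
theorem hogs_gram_matrix_posDef
    {p : ℕ} (d : ℕ)
    (μi : Fin p → Measure ℝ) [∀ i, IsProbabilityMeasure (μi i)]
    (μ : Measure (Fin p → ℝ)) [IsProbabilityMeasure μ]
    (habs : μ ≪ Measure.pi μi) (habs' : Measure.pi μi ≪ μ)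
    (L : Fin p → ℕ) (ψ : (i : Fin p) → ℕ → ℝ → ℝ)
    (hψmeas : ∀ i n, Measurable (ψ i n))
    (hψ0 : ∀ i, ψ i 0 = fun _ => 1)
    (hortho : ∀ i, ∀ a ≤ L i, ∀ b ≤ L i,
      ∫ t, ψ i a t * ψ i b t ∂(μi i) = if a = b then 1 else 0)
    -- Condition (C_prod): square-integrability of the tensor products under `P_X`
    (hT : ∀ l : (i : Fin p) → Fin (L i + 1), MemLp (tensorFun ψ l) 2 μ)
    -- the HOGS basis, indexed by multi-indices with nonempty support of size ≤ d
    (φ : {l : (i : Fin p) → Fin (L i + 1) //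
        (suppOf l).Nonempty ∧ (suppOf l).card ≤ d} → (Fin p → ℝ) → ℝ)
    (hφL2 : ∀ l, MemLp (φ l) 2 μ)
    (hφ : ∀ l, (fun x => φ l x - tensorFun ψ l.1 x) ∈
      Submodule.span ℝ {g : (Fin p → ℝ) → ℝ |
        ∃ m : (i : Fin p) → Fin (L i + 1), suppOf m ⊂ suppOf l.1 ∧ g = tensorFun ψ m}) :
    (Matrix.of fun a b => ∫ x, φ a x * φ b x ∂μ).PosDef := by
  classical
  set ν : Measure (Fin p → ℝ) := Measure.pi μi with hν
  -- squares of the ψ's are integrable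
  have hsq : ∀ i, ∀ a : Fin (L i + 1), Integrable (fun t => ψ i a t * ψ i a t) (μi i) := by
    intro i a
    by_contra h
    have h0 := integral_undef h
    rw [hortho i a (Fin.is_le a) a (Fin.is_le a), if_pos rfl] at h0
    exact one_ne_zero h0
  -- tensor functions are measurable
  have hTmeas : ∀ l : (i : Fin p) → Fin (L i + 1), Measurable (tensorFun ψ l) := fun l =>
    Finset.measurable_prod _ fun i _ => (hψmeas i (l i)).comp (measurable_pi_apply i)
  -- tensor functions are in L²(ν)
  have hTν : ∀ l : (i : Fin p) → Fin (L i + 1), MemLp (tensorFun ψ l) 2 ν := by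
    intro l
    rw [memLp_two_iff_integrable_sq (hTmeas l).aestronglyMeasurable]
    have heq : (fun x => tensorFun ψ l x ^ 2)
        = fun x : (i : Fin p) → ℝ => ∏ i, (fun t => ψ i (l i) t * ψ i (l i) t) (x i) := by
      funext x
      simp [tensorFun, sq, Finset.prod_mul_distrib]
    rw [heq, hν]
    exact pi_prod_integrable' μi fun i => hsq i (l i)
  -- inner products of tensor functions in L²(ν)
  set Tl : ((i : Fin p) → Fin (L i + 1)) → Lp ℝ 2 ν := fun l => (hTν l).toLp _ with hTl
  have hTT : ∀ l m : (i : Fin p) → Fin (L i + 1),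
      ⟪Tl l, Tl m⟫ = if l = m then (1 : ℝ) else 0 := by
    intro l m
    rw [hTl]
    rw [inner_toLp_eq' (hTν l) (hTν m)]
    have hkey : (∫ x : (i : Fin p) → ℝ, ∏ i, (ψ i (l i) (x i) * ψ i (m i) (x i))
          ∂Measure.pi μi) = ∏ i, ∫ t, ψ i (l i) t * ψ i (m i) t ∂(μi i) :=
      pi_prod_integral' μi (fun i t => ψ i (l i) t * ψ i (m i) t)
    simp only [tensorFun, ← Finset.prod_mul_distrib, hν]
    rw [hkey]
    have hfac : ∀ i, ∫ t, ψ i (l i) t * ψ i (m i) t ∂(μi i)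
        = if ((l i : ℕ) = (m i : ℕ)) then (1:ℝ) else 0 :=
      fun i => hortho i (l i) (Fin.is_le _) (m i) (Fin.is_le _)
    by_cases h : l = m
    · subst h
      simp [hfac]
    · rw [if_neg h]
      obtain ⟨i, hi⟩ := Function.ne_iff.mp h
      refine Finset.prod_eq_zero (Finset.mem_univ i) ?_
      rw [hfac i, if_neg (fun hc => hi (Fin.ext hc))]
  -- the corrections: membership in span gives L² membership and orthogonality
  have key : ∀ a : {l : (i : Fin p) → Fin (L i + 1) //
        (suppOf l).Nonempty ∧ (suppOf l).card ≤ d},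
      ∃ hg : MemLp (fun x => φ a x - tensorFun ψ a.1 x) 2 ν,
        ∀ b : (i : Fin p) → Fin (L i + 1), ¬ suppOf b ⊂ suppOf a.1 →
          ⟪Tl b, hg.toLp _⟫ = (0 : ℝ) := by
    intro a
    refine Submodule.span_induction ?_ ?_ ?_ ?_ (hφ a)
    · rintro g ⟨m, hm, rfl⟩
      refine ⟨hTν m, fun b hb => ?_⟩
      have : (hTν m).toLp (tensorFun ψ m) = Tl m := rfl
      rw [this, hTT b m, if_neg]
      rintro rfl
      exact hb hm
    · refine ⟨MemLp.zero, fun b hb => ?_⟩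
      rw [MemLp.toLp_zero, inner_zero_right]
    · rintro f g _ _ ⟨hf, hf0⟩ ⟨hg, hg0⟩
      refine ⟨hf.add hg, fun b hb => ?_⟩
      have : (hf.add hg).toLp (f + g) = hf.toLp f + hg.toLp g := MemLp.toLp_add hf hg
      rw [this, inner_add_right, hf0 b hb, hg0 b hb, add_zero]
    · rintro c f _ ⟨hf, hf0⟩
      refine ⟨hf.const_smul c, fun b hb => ?_⟩
      have : (hf.const_smul c).toLp (c • f) = c • hf.toLp f := MemLp.toLp_const_smul c hf
      rw [this, real_inner_smul_right, hf0 b hb, mul_zero]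
  choose hminus horth using key
  -- φ's are in L²(ν)
  have hφν : ∀ a, MemLp (φ a) 2 ν := by
    intro a
    have h1 := (hminus a).add (hTν a.1)
    have heq : ((fun x => φ a x - tensorFun ψ a.1 x) + tensorFun ψ a.1) = φ a := by
      funext x; simp
    rwa [heq] at h1
  set Φ : _ → Lp ℝ 2 ν := fun a => (hφν a).toLp (φ a) with hΦ
  have hΦdecomp : ∀ a, Φ a = (hminus a).toLp _ + Tl a.1 := by
    intro a
    have heq : φ a =ᵐ[ν] ((fun x => φ a x - tensorFun ψ a.1 x) + tensorFun ψ a.1) := by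
      refine Filter.Eventually.of_forall fun x => ?_
      simp
    calc Φ a = ((hminus a).add (hTν a.1)).toLp _ :=
          MemLp.toLp_congr (hφν a) ((hminus a).add (hTν a.1)) heq
      _ = (hminus a).toLp _ + Tl a.1 := MemLp.toLp_add (hminus a) (hTν a.1)
  -- linear independence of the Φ's in L²(ν)
  have lin : ∀ c : {l : (i : Fin p) → Fin (L i + 1) //
      (suppOf l).Nonempty ∧ (suppOf l).card ≤ d} → ℝ, (∑ a, c a • Φ a) = 0 → c = 0 := by
    intro c hc
    by_contra hcne
    obtain ⟨a0, ha0⟩ := Function.ne_iff.mp hcne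
    obtain ⟨b, hb, hmax⟩ := Finset.exists_max_image
      (Finset.univ.filter fun a => c a ≠ 0) (fun a => (suppOf a.1).card)
      ⟨a0, Finset.mem_filter.2 ⟨Finset.mem_univ a0, ha0⟩⟩
    have hbne : c b ≠ 0 := (Finset.mem_filter.mp hb).2
    have h0 : ⟪Tl b.1, ∑ a, c a • Φ a⟫ = (0 : ℝ) := by rw [hc]; exact inner_zero_right _
    rw [inner_sum] at h0
    have hterm : ∀ a, ⟪Tl b.1, c a • Φ a⟫ = if a = b then c b else 0 := by
      intro a
      rw [real_inner_smul_right]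
      by_cases hca : c a = 0
      · rw [hca, zero_mul]
        by_cases hab : a = b
        · rw [if_pos hab, ← hab, hca]
        · rw [if_neg hab]
      · have hamem : a ∈ Finset.univ.filter fun a => c a ≠ 0 :=
          Finset.mem_filter.2 ⟨Finset.mem_univ a, hca⟩
        have hcard : (suppOf a.1).card ≤ (suppOf b.1).card := hmax a hamem
        have hnsub : ¬ suppOf b.1 ⊂ suppOf a.1 := fun hsub =>
          absurd hcard (not_le.mpr (Finset.card_lt_card hsub))
        rw [hΦdecomp a, inner_add_right, horth a b.1 hnsub, zero_add, hTT b.1 a.1]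
        by_cases hab : a = b
        · subst hab; rw [if_pos rfl, if_pos rfl, mul_one]
        · rw [if_neg (fun hc' => hab (Subtype.ext hc'.symm)), if_neg hab, mul_zero]
    rw [Finset.sum_congr rfl fun a _ => hterm a, Finset.sum_ite_eq' Finset.univ b
      (fun _ => c b), if_pos (Finset.mem_univ b)] at h0
    exact hbne h0
  -- now the Gram matrix
  set Φμ : _ → Lp ℝ 2 μ := fun a => (hφL2 a).toLp (φ a) with hΦμ
  have hM : ∀ a b, (Matrix.of fun a b => ∫ x, φ a x * φ b x ∂μ) a b = ⟪Φμ a, Φμ b⟫ :=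
    fun a b => (inner_toLp_eq' (hφL2 a) (hφL2 b)).symm
  rw [Matrix.posDef_iff_dotProduct_mulVec]
  constructor
  · -- Hermitian
    ext a b
    simp only [Matrix.conjTranspose_apply, Matrix.of_apply, star_trivial]
    simp_rw [mul_comm]
  · intro x hx
    have hstar : star x = x := by funext a; exact star_trivial _
    rw [hstar]
    have hquad : dotProduct x (Matrix.mulVec (Matrix.of fun a b => ∫ y, φ a y * φ b y ∂μ) x)
        = ⟪∑ a, x a • Φμ a, ∑ b, x b • Φμ b⟫ := by
      rw [sum_inner]
      simp only [Matrix.mulVec, dotProduct]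
      refine Finset.sum_congr rfl fun a _ => ?_
      rw [real_inner_smul_left, inner_sum]
      simp only [Finset.mul_sum]
      refine Finset.sum_congr rfl fun b _ => ?_
      rw [real_inner_smul_right, hM a b]
      ring
    rw [hquad]
    have hvne : (∑ a, x a • Φμ a) ≠ 0 := by
      intro hzero
      apply hx
      -- from zero in L²(μ) to zero coefficients
      have h1 : ⇑(∑ a, x a • Φμ a) =ᵐ[μ] fun y => ∑ a, x a * φ a y :=
        coeFn_sum_smul_toLp' Finset.univ x φ hφL2
      have h2 : (fun y => ∑ a, x a * φ a y) =ᵐ[μ] 0 := by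
        refine Filter.EventuallyEq.trans h1.symm ?_
        rw [hzero]
        exact Lp.coeFn_zero ℝ 2 μ
      have h3 : (fun y => ∑ a, x a * φ a y) =ᵐ[ν] 0 :=
        h2.filter_mono habs'.ae_le
      have h4 : ⇑(∑ a, x a • Φ a) =ᵐ[ν] (0 : (Fin p → ℝ) → ℝ) :=
        (coeFn_sum_smul_toLp' Finset.univ x φ hφν).trans h3
      exact lin x (Lp.eq_zero_iff_ae_eq_zero.mpr h4)
    exact lt_of_le_of_ne real_inner_self_nonneg
      (fun h => hvne (inner_self_eq_zero.mp h.symm))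
end

section
/- For subsets A, B of {1,...,p}: the hierarchically orthogonal components satisfy E[η_u(X_u)·η_v(X_v)] = 0 whenever v ⊂ u (strict inclusion), for η_u ∈ H_u⁰ and η_v ∈ H_v⁰; in particular E[η_u(X_u)] = 0 for every nonempty u, so V(Y) = V(Σ_{u≠∅} η_u) = Σ_{u≠∅} [V(η_u) + Σ_{v: u∩v≠u, u∩v≠v} Cov(η_u, η_v)]. -/
open MeasureTheory

def DependsOnly {p : ℕ} (f : (Fin p → ℝ) → ℝ) (u : Finset (Fin p)) : Prop :=
  ∀ x y : Fin p → ℝ, (∀ i ∈ u, x i = y i) → f x = f y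

/-- The hierarchically orthogonal spaces `H_u⁰`. -/
def HOSpace {p : ℕ} (μ : Measure (Fin p → ℝ)) (u : Finset (Fin p)) :
    Set ((Fin p → ℝ) → ℝ) :=
  {h | Measurable h ∧ MemLp h 2 μ ∧ DependsOnly h u ∧
    ∀ v : Finset (Fin p), v ⊂ u → ∀ g ∈ HOSpace μ v, ∫ x, h x * g x ∂μ = 0}
termination_by u.card
decreasing_by exact Finset.card_lt_card (by assumption)

noncomputable def rvVar {α : Type*} [MeasurableSpace α] (μ : Measure α) (f : α → ℝ) : ℝ :=
  ∫ x, (f x - ∫ y, f y ∂μ) ^ 2 ∂μ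

noncomputable def rvCov {α : Type*} [MeasurableSpace α] (μ : Measure α) (f g : α → ℝ) : ℝ :=
  ∫ x, (f x - ∫ y, f y ∂μ) * (g x - ∫ y, g y ∂μ) ∂μ

/-- the HOFD components satisfy `E[η_u·η_v] = 0` for `v ⊂ u`, each
nonempty component has zero mean, and the variance of `Y = Σ_u η_u` decomposes as
`V(Y) = Σ_{u≠∅} [V(η_u) + Σ_{v : u∩v≠u, u∩v≠v} Cov(η_u, η_v)]`. -/
theorem hofd_variance_decomposition
    {p : ℕ} (μ : Measure (Fin p → ℝ)) [IsProbabilityMeasure μ]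
    (η : (Fin p → ℝ) → ℝ)
    (c : Finset (Fin p) → (Fin p → ℝ) → ℝ)
    (hc : ∀ u, c u ∈ HOSpace μ u)
    (hdecomp : η =ᵐ[μ] fun x => ∑ u ∈ (Finset.univ : Finset (Fin p)).powerset, c u x) :
    (∀ u v : Finset (Fin p), v ⊂ u → ∫ x, c u x * c v x ∂μ = 0) ∧
    (∀ u : Finset (Fin p), u ≠ ∅ → ∫ x, c u x ∂μ = 0) ∧
    rvVar μ η = ∑ u ∈ ((Finset.univ : Finset (Fin p)).powerset.erase ∅),
      (rvVar μ (c u) +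
        ∑ v ∈ (Finset.univ : Finset (Fin p)).powerset.filter
          (fun v => u ∩ v ≠ u ∧ u ∩ v ≠ v), rvCov μ (c u) (c v)) := by
  classical
  set P : Finset (Finset (Fin p)) := (Finset.univ : Finset (Fin p)).powerset with hPdef
  have hmem : ∀ u : Finset (Fin p), Measurable (c u) ∧ MemLp (c u) 2 μ ∧ DependsOnly (c u) u ∧
      ∀ v, v ⊂ u → ∀ g ∈ HOSpace μ v, ∫ x, c u x * g x ∂μ = 0 := fun u => by
    have := hc u; rw [HOSpace] at this; exact this
  have hL2 : ∀ u, MemLp (c u) 2 μ := fun u => (hmem u).2.1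
  have hint : ∀ u, Integrable (c u) μ := fun u => (hL2 u).integrable one_le_two
  have hmul : ∀ (f g : (Fin p → ℝ) → ℝ), MemLp f 2 μ → MemLp g 2 μ →
      Integrable (fun x => f x * g x) μ := fun f g hf hg => by
    have h12 : (1:ENNReal)/1 = 1/2 + 1/2 := by
      rw [ENNReal.div_add_div_same]; norm_num; rw [ENNReal.div_self] <;> norm_num
    exact memLp_one_iff_integrable.mp (hg.smul hf (r := 1))
  have orth : ∀ u v : Finset (Fin p), v ⊂ u → ∫ x, c u x * c v x ∂μ = 0 :=
    fun u v h => (hmem u).2.2.2 v h (c v) (hc v)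
  have hone : (fun _ : Fin p → ℝ => (1:ℝ)) ∈ HOSpace μ ∅ := by
    rw [HOSpace]
    exact ⟨measurable_const, memLp_const 1, fun x y _ => rfl,
      fun v hv => absurd hv (Finset.not_ssubset_empty v)⟩
  have mean0 : ∀ u : Finset (Fin p), u ≠ ∅ → ∫ x, c u x ∂μ = 0 := fun u hu => by
    have h := (hmem u).2.2.2 ∅
      (Finset.empty_ssubset.mpr (Finset.nonempty_iff_ne_empty.mpr hu)) _ hone
    simpa using h
  refine ⟨orth, mean0, ?_⟩
  -- covariance formula
  have covEq : ∀ u v : Finset (Fin p), rvCov μ (c u) (c v)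
      = (∫ x, c u x * c v x ∂μ) - (∫ x, c u x ∂μ) * (∫ x, c v x ∂μ) := by
    intro u v
    unfold rvCov
    set mu := ∫ y, c u y ∂μ with hmu
    set mv := ∫ y, c v y ∂μ with hmv
    have key : (fun x => (c u x - mu) * (c v x - mv))
        = fun x => (c u x * c v x - mu * c v x) - (mv * c u x - mu * mv) :=
      funext fun x => by ring
    have i1 : Integrable (fun x => c u x * c v x - mu * c v x) μ :=
      (hmul _ _ (hL2 u) (hL2 v)).sub ((hint v).const_mul mu)
    have i2 : Integrable (fun x => mv * c u x - mu * mv) μ :=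
      ((hint u).const_mul mv).sub (integrable_const _)
    rw [key, integral_sub i1 i2,
      integral_sub (hmul _ _ (hL2 u) (hL2 v)) ((hint v).const_mul mu),
      integral_sub ((hint u).const_mul mv) (integrable_const _),
      integral_const_mul, integral_const_mul, integral_const]
    simp only [measure_univ, probReal_univ, ENNReal.toReal_one, one_smul, smul_eq_mul, one_mul]
    ring
  have varEq : ∀ u : Finset (Fin p), rvVar μ (c u) = rvCov μ (c u) (c u) := fun u => by
    unfold rvVar rvCov
    exact integral_congr_ae (Filter.Eventually.of_forall fun x => by ring)
  -- covariance with the constant component c ∅ vanishes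
  have hconst : ∀ x y, c ∅ x = c ∅ y := fun x y => (hmem ∅).2.2.1 x y (by simp)
  have cov0 : ∀ v, rvCov μ (c ∅) (c v) = 0 := fun v => by
    set k := c ∅ (fun _ => 0) with hk
    have hck : c ∅ = fun _ => k := funext fun x => hconst x _
    rw [covEq, hck]
    simp only [integral_const_mul, integral_const, measure_univ, probReal_univ, ENNReal.toReal_one, one_smul,
      smul_eq_mul, one_mul]
    ring
  -- covariance vanishes for nested distinct sets when u ≠ ∅
  have covZero : ∀ u v : Finset (Fin p), u ≠ ∅ → v ≠ u → (u ⊆ v ∨ v ⊆ u) →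
      rvCov μ (c u) (c v) = 0 := by
    intro u v hu hvu h
    rcases h with h | h
    · have hss : u ⊂ v := ⟨h, fun h2 => hvu (le_antisymm h2 h)⟩
      have hv0 : v ≠ ∅ := by rintro rfl; exact hu (Finset.subset_empty.mp h)
      have hcomm : ∫ x, c u x * c v x ∂μ = ∫ x, c v x * c u x ∂μ :=
        integral_congr_ae (Filter.Eventually.of_forall fun x => mul_comm _ _)
      rw [covEq, hcomm, orth v u hss, mean0 v hv0]
      ring
    · have hss : v ⊂ u := ⟨h, fun h2 => hvu.symm (le_antisymm h2 h)⟩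
      rw [covEq, orth u v hss, mean0 u hu]
      ring
  -- variance of the sum
  set S : (Fin p → ℝ) → ℝ := fun x => ∑ u ∈ P, c u x with hS
  have hmS : ∫ x, S x ∂μ = ∑ u ∈ P, ∫ x, c u x ∂μ := by
    simp only [hS]
    exact integral_finset_sum _ fun u _ => hint u
  have hVη : rvVar μ η = rvVar μ S := by
    have hIη : ∫ x, η x ∂μ = ∫ x, S x ∂μ := integral_congr_ae hdecomp
    unfold rvVar
    refine integral_congr_ae (hdecomp.mono fun x hx => ?_)
    simp only [hx, hIη]
  have dL2 : ∀ u, MemLp (fun x => c u x - ∫ y, c u y ∂μ) 2 μ :=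
    fun u => (hL2 u).sub (memLp_const _)
  have dint : ∀ u v, Integrable
      (fun x => (c u x - ∫ y, c u y ∂μ) * (c v x - ∫ y, c v y ∂μ)) μ :=
    fun u v => hmul _ _ (dL2 u) (dL2 v)
  have main : rvVar μ S = ∑ u ∈ P, ∑ v ∈ P, rvCov μ (c u) (c v) := by
    unfold rvVar
    have h1 : ∀ x, (S x - ∫ y, S y ∂μ) ^ 2
        = ∑ u ∈ P, ∑ v ∈ P, (c u x - ∫ y, c u y ∂μ) * (c v x - ∫ y, c v y ∂μ) := by
      intro x
      rw [hmS]
      simp only [hS]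
      rw [← Finset.sum_sub_distrib, sq, Finset.sum_mul_sum]
    simp_rw [h1]
    rw [integral_finset_sum _ (fun u _ => integrable_finset_sum _ fun v _ => dint u v)]
    refine Finset.sum_congr rfl fun u _ => ?_
    rw [integral_finset_sum _ (fun v _ => dint u v)]
    rfl
  rw [hVη, main]
  -- rearrange the double sum
  rw [← Finset.sum_erase_add P _ (show ∅ ∈ P by simp [hPdef])]
  rw [Finset.sum_eq_zero (fun v _ => cov0 v), add_zero]
  refine Finset.sum_congr rfl fun u hu => ?_
  have hu0 : u ≠ ∅ := (Finset.mem_erase.mp hu).1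
  have huP : u ∈ P := (Finset.mem_erase.mp hu).2
  rw [← Finset.add_sum_erase P _ huP]
  congr 1
  · exact (varEq u).symm
  · rw [← Finset.sum_filter_add_sum_filter_not (P.erase u) (fun v => u ∩ v ≠ u ∧ u ∩ v ≠ v)]
    have e1 : (P.erase u).filter (fun v => u ∩ v ≠ u ∧ u ∩ v ≠ v)
        = P.filter (fun v => u ∩ v ≠ u ∧ u ∩ v ≠ v) := by
      ext v
      simp only [Finset.mem_filter, Finset.mem_erase]
      constructor
      · rintro ⟨⟨_, hvP⟩, hp⟩; exact ⟨hvP, hp⟩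
      · rintro ⟨hvP, hp⟩
        refine ⟨⟨?_, hvP⟩, hp⟩
        intro hvu; exact hp.1 (by rw [hvu, Finset.inter_self])
    have e2 : ∑ v ∈ (P.erase u).filter (fun v => ¬(u ∩ v ≠ u ∧ u ∩ v ≠ v)),
        rvCov μ (c u) (c v) = 0 := by
      refine Finset.sum_eq_zero fun v hv => ?_
      rcases Finset.mem_filter.mp hv with ⟨hve, hp⟩
      have hvu : v ≠ u := (Finset.mem_erase.mp hve).1
      rcases not_and_or.mp hp with h | h
      · exact covZero u v hu0 hvu (Or.inl (Finset.inter_eq_left.mp (not_not.mp h)))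
      · exact covZero u v hu0 hvu (Or.inr (Finset.inter_eq_right.mp (not_not.mp h)))
    rw [e1, e2, add_zero]
end
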